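/- For every n ≥ 1 there exists an indecomposable representation M of Q with dimension vector (n, n, n, n+1) together with a short exact sequence of representations 0 → P₄ⁿ⁻¹ → P₁ⁿ → M → 0 (for n = 2 this is the preprojective module with dimension vector (2,2,2,3) considered in the paper). -/

import Mathlib

variable (k : Type) [Field k]

/-- A finite-dimensional representation of the quiver `Q` with vertices `1,2,3,4`
and arrows `a : 1 → 2`, `b : 1 → 3`, `c : 2 → 4`, `d : 3 → 4`. -/
structure QRep where
  V1 : Type
  V2 : Type
  V3 : Type
  V4 : Type
  [acg1 : AddCommGroup V1]
  [acg2 : AddCommGroup V2]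
  [acg3 : AddCommGroup V3]
  [acg4 : AddCommGroup V4]
  [mod1 : Module k V1]
  [mod2 : Module k V2]
  [mod3 : Module k V3]
  [mod4 : Module k V4]
  [fin1 : FiniteDimensional k V1]
  [fin2 : FiniteDimensional k V2]
  [fin3 : FiniteDimensional k V3]
  [fin4 : FiniteDimensional k V4]
  ma : V1 →ₗ[k] V2
  mb : V1 →ₗ[k] V3
  mc : V2 →ₗ[k] V4
  md : V3 →ₗ[k] V4

attribute [instance] QRep.acg1 QRep.acg2 QRep.acg3 QRep.acg4
  QRep.mod1 QRep.mod2 QRep.mod3 QRep.mod4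
  QRep.fin1 QRep.fin2 QRep.fin3 QRep.fin4

variable {k}

/-- Morphisms of representations of `Q`. -/
@[ext]
structure QHom (M N : QRep k) where
  f1 : M.V1 →ₗ[k] N.V1
  f2 : M.V2 →ₗ[k] N.V2
  f3 : M.V3 →ₗ[k] N.V3
  f4 : M.V4 →ₗ[k] N.V4
  comm_a : f2 ∘ₗ M.ma = N.ma ∘ₗ f1
  comm_b : f3 ∘ₗ M.mb = N.mb ∘ₗ f1
  comm_c : f4 ∘ₗ M.mc = N.mc ∘ₗ f2
  comm_d : f4 ∘ₗ M.md = N.md ∘ₗ f3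

/-- Two representations are isomorphic iff there is a morphism all of whose
components are bijective. -/
def QIso (M N : QRep k) : Prop :=
  ∃ f : QHom M N, Function.Bijective f.f1 ∧ Function.Bijective f.f2 ∧
    Function.Bijective f.f3 ∧ Function.Bijective f.f4

/-- The zero representation(s). -/
def QRep.IsZeroRep (M : QRep k) : Prop :=
  Subsingleton M.V1 ∧ Subsingleton M.V2 ∧ Subsingleton M.V3 ∧ Subsingleton M.V4

/-- Vertexwise direct sum of representations. -/
def QRep.dsum (M N : QRep k) : QRep k where
  V1 := M.V1 × N.V1
  V2 := M.V2 × N.V2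
  V3 := M.V3 × N.V3
  V4 := M.V4 × N.V4
  ma := M.ma.prodMap N.ma
  mb := M.mb.prodMap N.mb
  mc := M.mc.prodMap N.mc
  md := M.md.prodMap N.md

/-- Direct sum of `n` copies of a representation. -/
def QRep.dpow (M : QRep k) (n : ℕ) : QRep k where
  V1 := Fin n → M.V1
  V2 := Fin n → M.V2
  V3 := Fin n → M.V3
  V4 := Fin n → M.V4
  ma := M.ma.compLeft (Fin n)
  mb := M.mb.compLeft (Fin n)
  mc := M.mc.compLeft (Fin n)
  md := M.md.compLeft (Fin n)

/-- A representation is indecomposable if it is nonzero and not isomorphic to a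
direct sum of two nonzero representations. -/
def QRep.Indecomposable (M : QRep k) : Prop :=
  ¬ M.IsZeroRep ∧ ∀ A B : QRep k, QIso M (A.dsum B) → A.IsZeroRep ∨ B.IsZeroRep

/-- `0 → A → B → C → 0` is short exact (vertexwise). -/
def QShortExact {A B C : QRep k} (f : QHom A B) (g : QHom B C) : Prop :=
  (Function.Injective f.f1 ∧ Function.Injective f.f2 ∧
    Function.Injective f.f3 ∧ Function.Injective f.f4) ∧
  (Function.Surjective g.f1 ∧ Function.Surjective g.f2 ∧
    Function.Surjective g.f3 ∧ Function.Surjective g.f4) ∧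
  (LinearMap.range f.f1 = LinearMap.ker g.f1 ∧ LinearMap.range f.f2 = LinearMap.ker g.f2 ∧
    LinearMap.range f.f3 = LinearMap.ker g.f3 ∧ LinearMap.range f.f4 = LinearMap.ker g.f4)

variable (k)

/-- The `n×n` Jordan block with eigenvalue `lam`, as a linear endomorphism of `kⁿ`. -/
def jordan (n : ℕ) (lam : k) : (Fin n → k) →ₗ[k] (Fin n → k) :=
  Matrix.mulVecLin (Matrix.of fun i j : Fin n =>
    if i = j then lam else if (i : ℕ) + 1 = (j : ℕ) then 1 else 0)

/-- The representation `M_n(λ) = (kⁿ,kⁿ,kⁿ,kⁿ; id,id,id,J_n(λ))`. -/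
def Mlam (n : ℕ) (lam : k) : QRep k where
  V1 := Fin n → k
  V2 := Fin n → k
  V3 := Fin n → k
  V4 := Fin n → k
  ma := LinearMap.id
  mb := LinearMap.id
  mc := LinearMap.id
  md := jordan k n lam

/-- The indecomposable projective `P₁ = (k,k,k,k²)`. -/
def P1 : QRep k where
  V1 := k
  V2 := k
  V3 := k
  V4 := k × k
  ma := LinearMap.id
  mb := LinearMap.id
  mc := LinearMap.inl k k k
  md := LinearMap.inr k k k

/-- The indecomposable projective `P₂ = (0,k,0,k)`. -/
def P2 : QRep k where
  V1 := Fin 0 → k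
  V2 := k
  V3 := Fin 0 → k
  V4 := k
  ma := 0
  mb := 0
  mc := LinearMap.id
  md := 0

/-- The indecomposable projective `P₃ = (0,0,k,k)`. -/
def P3 : QRep k where
  V1 := Fin 0 → k
  V2 := Fin 0 → k
  V3 := k
  V4 := k
  ma := 0
  mb := 0
  mc := 0
  md := LinearMap.id

/-- The indecomposable projective `P₄ = (0,0,0,k)`. -/
def P4 : QRep k where
  V1 := Fin 0 → k
  V2 := Fin 0 → k
  V3 := Fin 0 → k
  V4 := k
  ma := 0
  mb := 0
  mc := 0
  md := 0

set_option linter.unusedSectionVars false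
set_option maxHeartbeats 1000000

section Aux

def snocL (n : ℕ) : (Fin n → k) →ₗ[k] (Fin (n+1) → k) where
  toFun x := Fin.snoc x 0
  map_add' x y := by ext u; induction u using Fin.lastCases <;> simp
  map_smul' r x := by ext u; induction u using Fin.lastCases <;> simp

def consL (n : ℕ) : (Fin n → k) →ₗ[k] (Fin (n+1) → k) where
  toFun x := Fin.cons 0 x
  map_add' x y := by ext u; induction u using Fin.cases <;> simp
  map_smul' r x := by ext u; induction u using Fin.cases <;> simp

@[simp] lemma snocL_apply (n : ℕ) (x : Fin n → k) : snocL k n x = Fin.snoc x 0 := rfl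
@[simp] lemma consL_apply (n : ℕ) (x : Fin n → k) : consL k n x = Fin.cons 0 x := rfl

/-- The indecomposable with dimension vector `(m+1, m+1, m+1, m+2)`. -/
def Mn (m : ℕ) : QRep k where
  V1 := Fin (m+1) → k
  V2 := Fin (m+1) → k
  V3 := Fin (m+1) → k
  V4 := Fin (m+2) → k
  ma := LinearMap.id
  mb := LinearMap.id
  mc := snocL k (m+1)
  md := consL k (m+1)

end Aux

lemma snoc_zero' (m : ℕ) (x : Fin (m+1) → k) (c : k) :
    (Fin.snoc x c : Fin (m+2) → k) 0 = x 0 := by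
  have h0 : (0 : Fin (m+2)) = Fin.castSucc 0 := rfl
  rw [h0, Fin.snoc_castSucc]

lemma sc_id (m : ℕ) (w : Fin m → k) :
    (Fin.snoc (Fin.cons (0:k) w : Fin (m+1) → k) 0 : Fin (m+2) → k)
      = Fin.cons 0 (Fin.snoc w 0) := by
  ext u
  induction u using Fin.cases with
  | zero => rw [snoc_zero']; simp
  | succ p =>
    rw [Fin.cons_succ]
    induction p using Fin.lastCases with
    | last => rw [Fin.succ_last, Fin.snoc_last, Fin.snoc_last]
    | cast q =>
      rw [Fin.succ_castSucc, Fin.snoc_castSucc, Fin.cons_succ, Fin.snoc_castSucc]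

lemma single_sc (m : ℕ) (j : Fin m) (c : k) :
    (Fin.snoc (Pi.single (Fin.succ j) c) 0 : Fin (m+2) → k)
      = Fin.cons 0 (Pi.single j.castSucc c) := by
  ext u
  induction u using Fin.cases with
  | zero =>
    rw [snoc_zero']
    simp [Pi.single_apply, (Fin.succ_ne_zero j).symm]
  | succ p =>
    rw [Fin.cons_succ]
    induction p using Fin.lastCases with
    | last =>
      rw [Fin.succ_last, Fin.snoc_last]
      rw [Pi.single_apply, if_neg]
      exact (Fin.castSucc_lt_last j).ne'
    | cast q =>
      rw [Fin.succ_castSucc, Fin.snoc_castSucc]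
      simp [Pi.single_apply, Fin.castSucc_inj, Fin.succ_inj]

lemma decomp_v (m : ℕ) (v : Fin (m+2) → k) :
    (Fin.snoc (Fin.init v) 0 : Fin (m+2) → k)
      + Pi.single (Fin.last (m+1)) (v (Fin.last (m+1))) = v := by
  ext u
  induction u using Fin.lastCases with
  | last => simp
  | cast q => simp [Fin.init, Pi.single_apply, (Fin.castSucc_lt_last q).ne]

lemma cons_single (m : ℕ) (c : k) :
    (Fin.cons 0 (Pi.single (Fin.last m) c) : Fin (m+2) → k)
      = Pi.single (Fin.last (m+1)) c := by
  ext u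
  induction u using Fin.cases with
  | zero =>
    simp [Pi.single_apply, (Fin.last_pos (n := m+1)).ne']
  | succ p =>
    rw [Fin.cons_succ]
    induction p using Fin.lastCases with
    | last => rw [Fin.succ_last]; simp
    | cast q =>
      rw [Fin.succ_castSucc]
      simp [Pi.single_apply, Fin.castSucc_inj, (Fin.castSucc_lt_last q).ne,
        (Fin.castSucc_lt_last q.succ).ne]

/-- Endomorphism classification: every endomorphism of `Mn k m` is scalar. -/
lemma endo_scalar (m : ℕ) (f : QHom (Mn k m) (Mn k m)) :
    ∃ c : k, (∀ x, f.f1 x = c • x) ∧ (∀ x, f.f2 x = c • x) ∧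
      (∀ x, f.f3 x = c • x) ∧ (∀ x, f.f4 x = c • x) := by
  have h21 : f.f2 = f.f1 := by
    have := f.comm_a
    exact LinearMap.ext fun x => LinearMap.congr_fun this x
  have h31 : f.f3 = f.f1 := by
    have := f.comm_b
    exact LinearMap.ext fun x => LinearMap.congr_fun this x
  -- columns of the matrix of f.f1
  set col : Fin (m+1) → Fin (m+1) → k := fun j => f.f1 (Pi.single j 1) with hcol
  have hc : ∀ x, f.f4 (Fin.snoc x 0) = Fin.snoc (f.f1 x) 0 := by
    intro x
    have := congrArg (fun φ => φ x) f.comm_c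
    rw [h21] at this; exact this
  have hd : ∀ x, f.f4 (Fin.cons 0 x) = Fin.cons 0 (f.f1 x) := by
    intro x
    have := congrArg (fun φ => φ x) f.comm_d
    rw [h31] at this; exact this
  -- the key relation between columns
  have key : ∀ j : Fin m, (Fin.snoc (col j.succ) 0 : Fin (m+2) → k)
      = Fin.cons 0 (col j.castSucc) := by
    intro j
    have h1 : f.f4 (Fin.snoc (Pi.single (Fin.succ j) (1:k)) 0)
        = Fin.snoc (col j.succ) 0 := hc _
    have h2 : f.f4 (Fin.cons (0:k) (Pi.single j.castSucc 1))
        = Fin.cons 0 (col j.castSucc) := hd _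
    rw [← h1, ← h2, single_sc]
  -- coordinate consequences
  have K0 : ∀ j : Fin m, col j.succ 0 = 0 := by
    intro j
    have := congrFun (key j) 0
    rwa [snoc_zero', Fin.cons_zero] at this
  have K1 : ∀ j t : Fin m, col j.succ t.succ = col j.castSucc t.castSucc := by
    intro j t
    have := congrFun (key j) (Fin.castSucc t.succ)
    rwa [Fin.snoc_castSucc, ← Fin.succ_castSucc, Fin.cons_succ] at this
  have K2 : ∀ j : Fin m, col j.castSucc (Fin.last m) = 0 := by
    intro j
    have := congrFun (key j) (Fin.succ (Fin.last m))
    rw [Fin.cons_succ, Fin.succ_last, Fin.snoc_last] at this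
    exact this.symm
  -- below-diagonal entries vanish
  have C1 : ∀ N : ℕ, ∀ t i : Fin (m+1), (t:ℕ) = N → (t:ℕ) < (i:ℕ) → col i t = 0 := by
    intro N
    induction N with
    | zero =>
      intro t i ht hti
      obtain ⟨j, rfl⟩ := Fin.eq_succ_of_ne_zero (i := i) (by
        intro h; rw [h] at hti; simp at hti)
      have ht0 : t = 0 := by ext; simpa using ht
      rw [ht0]; exact K0 j
    | succ N ih =>
      intro t i ht hti
      obtain ⟨t', rfl⟩ := Fin.eq_succ_of_ne_zero (i := t) (by
        intro h; rw [h] at ht; simp at ht)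
      obtain ⟨j', rfl⟩ := Fin.eq_succ_of_ne_zero (i := i) (by
        intro h; rw [h] at hti; simp at hti)
      rw [K1 j' t']
      exact ih t'.castSucc j'.castSucc (by simpa using Nat.succ_injective ht)
        (by simpa using hti)
  -- above-diagonal entries vanish
  have C2 : ∀ N : ℕ, ∀ t i : Fin (m+1), m - (t:ℕ) = N → (i:ℕ) < (t:ℕ) → col i t = 0 := by
    intro N
    induction N with
    | zero =>
      intro t i ht hti
      have htl : t = Fin.last m := by ext; simp [Fin.last]; omega
      obtain ⟨j, rfl⟩ := (Fin.exists_castSucc_eq (i := i)).mpr (by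
        intro h; rw [h, htl] at hti; simp [Fin.last] at hti)
      rw [htl]; exact K2 j
    | succ N ih =>
      intro t i ht hti
      obtain ⟨t', rfl⟩ := (Fin.exists_castSucc_eq (i := t)).mpr (by
        intro h; rw [h] at ht; simp [Fin.last] at ht)
      obtain ⟨j', rfl⟩ := (Fin.exists_castSucc_eq (i := i)).mpr (by
        intro h; rw [h] at hti; simp [Fin.last] at hti
        have := t'.isLt; omega)
      rw [← K1 j' t']
      exact ih t'.succ j'.succ (by simp at ht ⊢; omega) (by simpa using hti)
  -- diagonal entries are all equal
  have C3 : ∀ N : ℕ, ∀ t : Fin (m+1), (t:ℕ) = N → col t t = col 0 0 := by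
    intro N
    induction N with
    | zero =>
      intro t ht
      have ht0 : t = 0 := by ext; simpa using ht
      rw [ht0]
    | succ N ih =>
      intro t ht
      obtain ⟨t', rfl⟩ := Fin.eq_succ_of_ne_zero (i := t) (by
        intro h; rw [h] at ht; simp at ht)
      rw [K1 t' t']
      exact ih t'.castSucc (by simpa using Nat.succ_injective ht)
  set c : k := col 0 0 with hcdef
  have colval : ∀ i t : Fin (m+1), col i t = if t = i then c else 0 := by
    intro i t
    rcases lt_trichotomy ((t:ℕ)) ((i:ℕ)) with h | h | h
    · rw [if_neg (by intro he; rw [he] at h; omega)]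
      exact C1 _ t i rfl h
    · have : t = i := by ext; exact h
      rw [if_pos this, this]
      exact C3 _ i rfl
    · rw [if_neg (by intro he; rw [he] at h; omega)]
      exact C2 _ t i rfl h
  -- f.f1 is scalar
  have hf1 : ∀ x : Fin (m+1) → k, f.f1 x = c • x := by
    intro x
    have hx : x = ∑ j, (Pi.single j (x j) : Fin (m+1) → k) := by
      rw [Finset.univ_sum_single]
    conv_lhs => rw [hx]
    refine (map_sum f.f1 _ _).trans ?_
    funext t
    refine (Finset.sum_apply t _ _).trans ?_
    have hterm : ∀ j : Fin (m+1), f.f1 (Pi.single j (x j)) t = if t = j then x j * c else 0 := by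
      intro j
      have hs : (Pi.single j (x j) : Fin (m+1) → k) = x j • (Pi.single j (1:k) : Fin (m+1) → k) := by
        rw [← Pi.single_smul, smul_eq_mul, mul_one]
      rw [hs]; refine (congrFun (f.f1.map_smul (x j) (Pi.single j (1:k))) t).trans ?_
      have hcv : f.f1 (Pi.single j (1:k)) t = if t = j then c else 0 := colval j t
      have hb : (x j • f.f1 (Pi.single j (1:k))) t = x j * (f.f1 (Pi.single j (1:k)) t) := rfl
      refine hb.trans ?_; rw [hcv]
      split <;> ring
    rw [Finset.sum_congr rfl (fun j _ => hterm j),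
      Finset.sum_ite_eq Finset.univ t (fun j => x j * c)]
    simp [mul_comm]
  refine ⟨c, hf1, fun x => by rw [h21]; exact hf1 x, fun x => by rw [h31]; exact hf1 x, ?_⟩
  -- f.f4 is scalar
  intro v
  set u1 : Fin (m+1) → k := Fin.init v with hu1
  set u2 : Fin (m+1) → k := Pi.single (Fin.last m) (v (Fin.last (m+1))) with hu2
  have hc' : ∀ x, f.f4 (snocL k (m+1) x) = snocL k (m+1) (f.f1 x) := fun x => hc x
  have hd' : ∀ x, f.f4 (consL k (m+1) x) = consL k (m+1) (f.f1 x) := fun x => hd x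
  have hsingle : (Pi.single (Fin.last (m+1)) (v (Fin.last (m+1))) : Fin (m+2) → k)
      = Fin.cons 0 u2 := (cons_single k m _).symm
  have hv : v = snocL k (m+1) u1 + consL k (m+1) u2 := by
    rw [snocL_apply, consL_apply, ← hsingle]
    exact (decomp_v k m v).symm
  rw [hv]; refine (f.f4.map_add _ _).trans ?_
  rw [hc', hd', hf1, hf1, map_smul, map_smul]; exact (smul_add _ _ _).symm

section ConjAux

variable {V W VA VB WA WB X Y : Type}
  [AddCommGroup V] [AddCommGroup W] [AddCommGroup VA] [AddCommGroup VB]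
  [AddCommGroup WA] [AddCommGroup WB] [AddCommGroup X] [AddCommGroup Y]
  [Module k V] [Module k W] [Module k VA] [Module k VB] [Module k WA] [Module k WB]
  [Module k X] [Module k Y]

lemma conj_comm (mV : V →ₗ[k] W) (mA : VA →ₗ[k] WA) (mB : VB →ₗ[k] WB)
    (fV : V →ₗ[k] VA × VB) (fW : W →ₗ[k] WA × WB)
    (hV : Function.Bijective fV) (hW : Function.Bijective fW)
    (hcomm : fW ∘ₗ mV = (mA.prodMap mB) ∘ₗ fV) :
    ((LinearEquiv.ofBijective fW hW).symm.toLinearMap ∘ₗ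
        ((LinearMap.id : WA →ₗ[k] WA).prodMap (0 : WB →ₗ[k] WB)) ∘ₗ fW) ∘ₗ mV
      = mV ∘ₗ ((LinearEquiv.ofBijective fV hV).symm.toLinearMap ∘ₗ
        ((LinearMap.id : VA →ₗ[k] VA).prodMap (0 : VB →ₗ[k] VB)) ∘ₗ fV) := by
  have key : ∀ u : VA × VB, (LinearEquiv.ofBijective fW hW).symm ((mA.prodMap mB) u)
      = mV ((LinearEquiv.ofBijective fV hV).symm u) := by
    intro u
    set y := (LinearEquiv.ofBijective fV hV).symm u with hy
    have hu : fV y = u := (LinearEquiv.ofBijective fV hV).apply_symm_apply u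
    have h2 : (mA.prodMap mB) u = fW (mV y) := by
      rw [← hu]
      exact (LinearMap.congr_fun hcomm y).symm
    rw [h2]
    exact (LinearEquiv.ofBijective fW hW).symm_apply_apply (mV y)
  ext x
  simp only [LinearMap.comp_apply, LinearEquiv.coe_coe]
  have hpt : fW (mV x) = (mA.prodMap mB) (fV x) := LinearMap.congr_fun hcomm x
  rw [hpt]
  have swap : ((LinearMap.id : WA →ₗ[k] WA).prodMap (0 : WB →ₗ[k] WB))
        ((mA.prodMap mB) (fV x))
      = (mA.prodMap mB) (((LinearMap.id : VA →ₗ[k] VA).prodMap (0 : VB →ₗ[k] VB)) (fV x)) := by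
    simp [LinearMap.prodMap_apply]
  rw [swap, key]

lemma comp_zero_ann (φ : V →ₗ[k] X × Y) (hb : Function.Bijective φ)
    (h0 : ∀ x : V, (LinearEquiv.ofBijective φ hb).symm
      (((LinearMap.id : X →ₗ[k] X).prodMap (0 : Y →ₗ[k] Y)) (φ x)) = 0) (a : X) : a = 0 := by
  obtain ⟨x, hx⟩ := hb.2 (a, 0)
  have h := h0 x
  rw [hx] at h
  have h1 : ((LinearMap.id : X →ₗ[k] X).prodMap (0 : Y →ₗ[k] Y)) ((a, 0) : X × Y)
      = ((a, 0) : X × Y) := by simp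
  rw [h1] at h
  have h2 := (LinearEquiv.map_eq_zero_iff _).mp h
  exact congrArg Prod.fst h2

lemma comp_id_ann (φ : V →ₗ[k] X × Y) (hb : Function.Bijective φ)
    (hid : ∀ x : V, (LinearEquiv.ofBijective φ hb).symm
      (((LinearMap.id : X →ₗ[k] X).prodMap (0 : Y →ₗ[k] Y)) (φ x)) = x) (b : Y) : b = 0 := by
  obtain ⟨x, hx⟩ := hb.2 ((0 : X), b)
  have h := hid x
  have h2 : ((LinearMap.id : X →ₗ[k] X).prodMap (0 : Y →ₗ[k] Y)) (φ x) = φ x := by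
    have h3 := congrArg (LinearEquiv.ofBijective φ hb) h
    rwa [LinearEquiv.apply_symm_apply] at h3
  rw [hx] at h2
  have h4 : ((0 : X), (0 : Y)) = ((0 : X), b) := by simpa using h2
  exact (congrArg Prod.snd h4).symm

end ConjAux

lemma Mn_indec (m : ℕ) : (Mn k m).Indecomposable := by
  constructor
  · rintro ⟨h1, -, -, -⟩
    have hs : Subsingleton (Fin (m+1) → k) := h1
    have h0 : (Pi.single 0 1 : Fin (m+1) → k) = (0 : Fin (m+1) → k) := Subsingleton.elim _ _
    have := congrFun h0 0
    rw [Pi.single_eq_same] at this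
    exact one_ne_zero this
  · rintro A B ⟨f, hb1, hb2, hb3, hb4⟩
    obtain ⟨c, hc1, hc2, hc3, hc4⟩ := endo_scalar k m
      { f1 := (LinearEquiv.ofBijective f.f1 hb1).symm.toLinearMap ∘ₗ
          ((LinearMap.id : A.V1 →ₗ[k] A.V1).prodMap (0 : B.V1 →ₗ[k] B.V1)) ∘ₗ f.f1
        f2 := (LinearEquiv.ofBijective f.f2 hb2).symm.toLinearMap ∘ₗ
          ((LinearMap.id : A.V2 →ₗ[k] A.V2).prodMap (0 : B.V2 →ₗ[k] B.V2)) ∘ₗ f.f2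
        f3 := (LinearEquiv.ofBijective f.f3 hb3).symm.toLinearMap ∘ₗ
          ((LinearMap.id : A.V3 →ₗ[k] A.V3).prodMap (0 : B.V3 →ₗ[k] B.V3)) ∘ₗ f.f3
        f4 := (LinearEquiv.ofBijective f.f4 hb4).symm.toLinearMap ∘ₗ
          ((LinearMap.id : A.V4 →ₗ[k] A.V4).prodMap (0 : B.V4 →ₗ[k] B.V4)) ∘ₗ f.f4
        comm_a := conj_comm k (Mn k m).ma A.ma B.ma f.f1 f.f2 hb1 hb2 f.comm_a
        comm_b := conj_comm k (Mn k m).mb A.mb B.mb f.f1 f.f3 hb1 hb3 f.comm_b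
        comm_c := conj_comm k (Mn k m).mc A.mc B.mc f.f2 f.f4 hb2 hb4 f.comm_c
        comm_d := conj_comm k (Mn k m).md A.md B.md f.f3 f.f4 hb3 hb4 f.comm_d }
    -- the scalar is idempotent
    have hidem : c * c = c := by
      have hx : ∀ x : Fin (m+1) → k,
          (LinearEquiv.ofBijective f.f1 hb1).symm
            (((LinearMap.id : A.V1 →ₗ[k] A.V1).prodMap (0 : B.V1 →ₗ[k] B.V1)) (f.f1 x))
          = c • x := hc1
      have hP : ∀ w : A.V1 × B.V1,
          ((LinearMap.id : A.V1 →ₗ[k] A.V1).prodMap (0 : B.V1 →ₗ[k] B.V1))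
            (((LinearMap.id : A.V1 →ₗ[k] A.V1).prodMap (0 : B.V1 →ₗ[k] B.V1)) w)
          = ((LinearMap.id : A.V1 →ₗ[k] A.V1).prodMap (0 : B.V1 →ₗ[k] B.V1)) w := by
        intro w; simp
      set x : Fin (m+1) → k := Pi.single 0 1 with hxdef
      have e1 : c • (c • x) = c • x := by
        exact (congrArg (fun y => c • y) (hx x)).symm.trans ((hx _).symm.trans (by
              rw [show f.f1 ((LinearEquiv.ofBijective f.f1 hb1).symm
                  (((LinearMap.id : A.V1 →ₗ[k] A.V1).prodMap (0 : B.V1 →ₗ[k] B.V1)) (f.f1 x)))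
                = ((LinearMap.id : A.V1 →ₗ[k] A.V1).prodMap (0 : B.V1 →ₗ[k] B.V1)) (f.f1 x) from
                  (LinearEquiv.ofBijective f.f1 hb1).apply_symm_apply _]
              exact (congrArg (LinearEquiv.ofBijective f.f1 hb1).symm (hP (f.f1 x))).trans (hx x)))
      have e2 := congrFun e1 0
      simp only [Pi.smul_apply, hxdef, Pi.single_eq_same, smul_eq_mul, mul_one] at e2
      exact e2
    have hcases : c = 0 ∨ c = 1 := by
      have h5 : c * (c - 1) = 0 := by linear_combination hidem
      rcases mul_eq_zero.mp h5 with h | h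
      · exact Or.inl h
      · exact Or.inr (sub_eq_zero.mp h)
    rcases hcases with rfl | rfl
    · left
      refine ⟨subsingleton_of_forall_eq 0 (fun a => comp_zero_ann k f.f1 hb1 (fun x => by
          have hh := hc1 x; rw [zero_smul] at hh; exact hh) a), ?_, ?_, ?_⟩
      · exact subsingleton_of_forall_eq 0 (fun a => comp_zero_ann k f.f2 hb2 (fun x => by
          have hh := hc2 x; rw [zero_smul] at hh; exact hh) a)
      · exact subsingleton_of_forall_eq 0 (fun a => comp_zero_ann k f.f3 hb3 (fun x => by
          have hh := hc3 x; rw [zero_smul] at hh; exact hh) a)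
      · exact subsingleton_of_forall_eq 0 (fun a => comp_zero_ann k f.f4 hb4 (fun x => by
          have hh := hc4 x; rw [zero_smul] at hh; exact hh) a)
    · right
      refine ⟨subsingleton_of_forall_eq 0 (fun b => comp_id_ann k f.f1 hb1 (fun x => by
          have hh := hc1 x; rw [one_smul] at hh; exact hh) b), ?_, ?_, ?_⟩
      · exact subsingleton_of_forall_eq 0 (fun b => comp_id_ann k f.f2 hb2 (fun x => by
          have hh := hc2 x; rw [one_smul] at hh; exact hh) b)
      · exact subsingleton_of_forall_eq 0 (fun b => comp_id_ann k f.f3 hb3 (fun x => by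
          have hh := hc3 x; rw [one_smul] at hh; exact hh) b)
      · exact subsingleton_of_forall_eq 0 (fun b => comp_id_ann k f.f4 hb4 (fun x => by
          have hh := hc4 x; rw [one_smul] at hh; exact hh) b)

def pairL (N : ℕ) : ((Fin N → k) × (Fin N → k)) →ₗ[k] (Fin N → k × k) where
  toFun p := fun i => (p.1 i, p.2 i)
  map_add' p q := rfl
  map_smul' r p := rfl

@[simp] lemma pairL_apply (N : ℕ) (p : (Fin N → k) × (Fin N → k)) (i : Fin N) :
    pairL k N p i = (p.1 i, p.2 i) := rfl

/-- The quotient map `P₁^{m+1} → Mn k m`. -/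
def gHom (m : ℕ) : QHom ((P1 k).dpow (m+1)) (Mn k m) where
  f1 := LinearMap.id
  f2 := LinearMap.id
  f3 := LinearMap.id
  f4 := snocL k (m+1) ∘ₗ (LinearMap.fst k k k).compLeft (Fin (m+1)) +
        consL k (m+1) ∘ₗ (LinearMap.snd k k k).compLeft (Fin (m+1))
  comm_a := by ext x; rfl
  comm_b := by ext x; rfl
  comm_c := by
    apply LinearMap.ext; intro x
    show (snocL k (m+1) ∘ₗ (LinearMap.fst k k k).compLeft (Fin (m+1)) +
        consL k (m+1) ∘ₗ (LinearMap.snd k k k).compLeft (Fin (m+1)))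
        ((LinearMap.inl k k k).compLeft (Fin (m+1)) x) = snocL k (m+1) x
    have h1 : (LinearMap.fst k k k).compLeft (Fin (m+1))
        ((LinearMap.inl k k k).compLeft (Fin (m+1)) x) = x := by ext i; rfl
    have h2 : (LinearMap.snd k k k).compLeft (Fin (m+1))
        ((LinearMap.inl k k k).compLeft (Fin (m+1)) x) = 0 := by ext i; rfl
    simp only [LinearMap.add_apply, LinearMap.comp_apply, h1, h2, map_zero, add_zero]
  comm_d := by
    apply LinearMap.ext; intro x
    show (snocL k (m+1) ∘ₗ (LinearMap.fst k k k).compLeft (Fin (m+1)) +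
        consL k (m+1) ∘ₗ (LinearMap.snd k k k).compLeft (Fin (m+1)))
        ((LinearMap.inr k k k).compLeft (Fin (m+1)) x) = consL k (m+1) x
    have h1 : (LinearMap.fst k k k).compLeft (Fin (m+1))
        ((LinearMap.inr k k k).compLeft (Fin (m+1)) x) = 0 := by ext i; rfl
    have h2 : (LinearMap.snd k k k).compLeft (Fin (m+1))
        ((LinearMap.inr k k k).compLeft (Fin (m+1)) x) = x := by ext i; rfl
    simp only [LinearMap.add_apply, LinearMap.comp_apply, h1, h2, map_zero, zero_add]

/-- The inclusion `P₄^m → P₁^{m+1}`. -/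
def fHom (m : ℕ) : QHom ((P4 k).dpow m) ((P1 k).dpow (m+1)) where
  f1 := 0
  f2 := 0
  f3 := 0
  f4 := pairL k (m+1) ∘ₗ ((consL k m).prod (-(snocL k m)))
  comm_a := by
    apply LinearMap.ext; intro x
    show (0 : _ →ₗ[k] _) _ = ((P1 k).dpow (m+1)).ma ((0 : _ →ₗ[k] _) x)
    rw [LinearMap.zero_apply, LinearMap.zero_apply, map_zero]
  comm_b := by
    apply LinearMap.ext; intro x
    show (0 : _ →ₗ[k] _) _ = ((P1 k).dpow (m+1)).mb ((0 : _ →ₗ[k] _) x)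
    rw [LinearMap.zero_apply, LinearMap.zero_apply, map_zero]
  comm_c := by
    apply LinearMap.ext; intro x
    have hs : Subsingleton (Fin m → Fin 0 → k) := inferInstance
    have hx0 : x = 0 := @Subsingleton.elim _ hs x 0
    rw [hx0]
    simp
  comm_d := by
    apply LinearMap.ext; intro x
    have hs : Subsingleton (Fin m → Fin 0 → k) := inferInstance
    have hx0 : x = 0 := @Subsingleton.elim _ hs x 0
    rw [hx0]
    simp

lemma ses (m : ℕ) : QShortExact (fHom k m) (gHom k m) := by
  have g4eval : ∀ (y : Fin (m+1) → k × k), (gHom k m).f4 y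
      = (Fin.snoc (fun i => (y i).1) 0 : Fin (m+2) → k) + Fin.cons 0 (fun i => (y i).2) := by
    intro y; rfl
  refine ⟨⟨?_, ?_, ?_, ?_⟩, ⟨?_, ?_, ?_, ?_⟩, ⟨?_, ?_, ?_, ?_⟩⟩
  · have hs : Subsingleton (Fin m → Fin 0 → k) := inferInstance
    exact fun a b _ => @Subsingleton.elim _ hs a b
  · have hs : Subsingleton (Fin m → Fin 0 → k) := inferInstance
    exact fun a b _ => @Subsingleton.elim _ hs a b
  · have hs : Subsingleton (Fin m → Fin 0 → k) := inferInstance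
    exact fun a b _ => @Subsingleton.elim _ hs a b
  · -- injectivity of f4
    intro w w' h
    funext t
    have h3 := congrArg Prod.fst (congrFun h t.succ)
    have hl : ((fHom k m).f4 w t.succ).1 = w t := by
      show (Fin.cons (0:k) w : Fin (m+1) → k) t.succ = w t
      exact Fin.cons_succ _ _ _
    have hr : ((fHom k m).f4 w' t.succ).1 = w' t := by
      show (Fin.cons (0:k) w' : Fin (m+1) → k) t.succ = w' t
      exact Fin.cons_succ _ _ _
    rw [hl, hr] at h3
    exact h3
  · exact fun x => ⟨x, rfl⟩
  · exact fun x => ⟨x, rfl⟩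
  · exact fun x => ⟨x, rfl⟩
  · -- surjectivity of g4
    intro v
    refine ⟨fun i => (Fin.init v i,
      (Pi.single (Fin.last m) (v (Fin.last (m+1))) : Fin (m+1) → k) i), ?_⟩
    rw [g4eval]
    show (Fin.snoc (Fin.init v) 0 : Fin (m+2) → k)
        + Fin.cons 0 (Pi.single (Fin.last m) (v (Fin.last (m+1)))) = v
    rw [cons_single]; exact decomp_v k m v
  · show LinearMap.range (0 : _ →ₗ[k] _) = LinearMap.ker (LinearMap.id : _ →ₗ[k] _)
    rw [LinearMap.range_zero, LinearMap.ker_id]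
  · show LinearMap.range (0 : _ →ₗ[k] _) = LinearMap.ker (LinearMap.id : _ →ₗ[k] _)
    rw [LinearMap.range_zero, LinearMap.ker_id]
  · show LinearMap.range (0 : _ →ₗ[k] _) = LinearMap.ker (LinearMap.id : _ →ₗ[k] _)
    rw [LinearMap.range_zero, LinearMap.ker_id]
  · -- range f4 = ker g4
    apply le_antisymm
    · rintro y ⟨w, rfl⟩
      rw [LinearMap.mem_ker]
      have h1 : (gHom k m).f4 ((fHom k m).f4 w)
          = (Fin.snoc (Fin.cons 0 w : Fin (m+1) → k) 0 : Fin (m+2) → k)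
            + Fin.cons 0 (-(Fin.snoc w 0 : Fin (m+1) → k)) := rfl
      rw [h1]
      have hneg : (Fin.cons 0 (-(Fin.snoc w 0 : Fin (m+1) → k)) : Fin (m+2) → k)
          = -(Fin.cons 0 (Fin.snoc w 0 : Fin (m+1) → k) : Fin (m+2) → k) := by
        have := (consL k (m+1)).map_neg (Fin.snoc w 0)
        simpa using this
      rw [hneg, sc_id k m w]; exact add_neg_cancel _
    · intro y hy
      rw [LinearMap.mem_ker, g4eval y] at hy
      refine ⟨fun t => (y t.succ).1, ?_⟩
      have hy' : ((Fin.snoc (fun i => (y i).1) 0 : Fin (m+2) → k) + Fin.cons 0 fun i => (y i).2) = 0 := hy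
      have F0 : (y 0).1 = 0 := by
        have h0 := congrFun hy' 0
        rwa [Pi.add_apply, snoc_zero', Fin.cons_zero, add_zero, Pi.zero_apply] at h0
      have Fsucc : ∀ u : Fin (m+1),
          (Fin.snoc (fun i => (y i).1) 0 : Fin (m+2) → k) u.succ + (y u).2 = 0 := by
        intro u
        have h0 := congrFun hy' u.succ
        rwa [Pi.add_apply, Fin.cons_succ, Pi.zero_apply] at h0
      funext i
      apply Prod.ext
      · show (Fin.cons 0 (fun t : Fin m => (y t.succ).1) : Fin (m+1) → k) i = (y i).1
        induction i using Fin.cases with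
        | zero => rw [Fin.cons_zero]; exact F0.symm
        | succ t => rw [Fin.cons_succ]
      · show -((Fin.snoc (fun t : Fin m => (y t.succ).1) 0 : Fin (m+1) → k) i) = (y i).2
        induction i using Fin.lastCases with
        | last =>
          rw [Fin.snoc_last, neg_zero]
          have h0 := Fsucc (Fin.last m)
          rw [Fin.succ_last, Fin.snoc_last, zero_add] at h0
          exact h0.symm
        | cast t =>
          rw [Fin.snoc_castSucc]
          have h0 := Fsucc t.castSucc
          rw [Fin.succ_castSucc, Fin.snoc_castSucc] at h0
          linear_combination -h0

/-- for every `n ≥ 1` there is an indecomposable representation `M`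
of `Q` with dimension vector `(n,n,n,n+1)` together with a short exact sequence
`0 → P₄ⁿ⁻¹ → P₁ⁿ → M → 0`. -/
theorem stmt12 (k : Type) [Field k] (n : ℕ) (hn : 1 ≤ n) :
    ∃ M : QRep k, M.Indecomposable ∧
      Module.finrank k M.V1 = n ∧ Module.finrank k M.V2 = n ∧
      Module.finrank k M.V3 = n ∧ Module.finrank k M.V4 = n + 1 ∧
      ∃ (f : QHom ((P4 k).dpow (n - 1)) ((P1 k).dpow n))
        (g : QHom ((P1 k).dpow n) M), QShortExact f g := by
  obtain ⟨m, rfl⟩ : ∃ m, n = m + 1 := ⟨n - 1, by omega⟩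
  refine ⟨Mn k m, Mn_indec k m, ?_, ?_, ?_, ?_, fHom k m, gHom k m, ses k m⟩
  · exact Module.finrank_fin_fun k
  · exact Module.finrank_fin_fun k
  · exact Module.finrank_fin_fun k
  · exact Module.finrank_fin_fun k
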